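/- Let p(x) ∝ (a+x)^{−3/2} e^{−x} on (0,∞) with a > 0, and u(x) = x. With Φ(y) = cosh(y) − 1, the function α ↦ E_p[Φ(αu)] is finite for α ∈ [−1,1] and infinite for |α| > 1; in particular E_p[Φ(u)] < ∞ (the unit ball boundary of the Orlicz norm is attained with finite modular at a point where the modular is not steep). -/
import Mathlib

open MeasureTheory Real Set Filter

lemma rpow_shift_integrable (a : ℝ) (ha : 0 < a) :
    IntegrableOn (fun x : ℝ => (a + x) ^ (-(3 : ℝ) / 2)) (Set.Ioi 0) := by
  have h := integrableOn_Ioi_rpow_of_lt (a := -(3:ℝ)/2) (by norm_num) ha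
  have hemb : MeasurableEmbedding (fun x : ℝ => a + x) :=
    (MeasurableEquiv.addLeft a).measurableEmbedding
  have hmp : MeasurePreserving (fun x : ℝ => a + x) volume volume :=
    measurePreserving_add_left volume a
  have h2 := (hmp.integrableOn_comp_preimage hemb
      (f := fun x : ℝ => x ^ (-(3:ℝ)/2)) (s := Set.Ioi a)).2 h
  have hpre : (fun x : ℝ => a + x) ⁻¹' Set.Ioi a = Set.Ioi 0 := by
    ext x; simp
  rwa [hpre] at h2

lemma g_integrable (a : ℝ) (ha : 0 < a) :
    IntegrableOn (fun x : ℝ => (a + x) ^ (-(3 : ℝ) / 2) * Real.exp (-x)) (Set.Ioi 0) := by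
  refine (rpow_shift_integrable a ha).mono' ?_ ?_
  · refine (ContinuousOn.mul ?_
        (Real.continuous_exp.comp continuous_neg).continuousOn).aestronglyMeasurable
        measurableSet_Ioi
    refine ContinuousOn.rpow_const (continuous_const.add continuous_id).continuousOn ?_
    intro x hx
    exact Or.inl (by have := hx.out; positivity)
  · filter_upwards [ae_restrict_mem measurableSet_Ioi] with x hx
    have hax : 0 < a + x := by have := hx.out; linarith
    have h1 : Real.exp (-x) ≤ 1 := Real.exp_le_one_iff.2 (by linarith [hx.out])
    have h2 : (0:ℝ) ≤ (a + x) ^ (-(3:ℝ)/2) := Real.rpow_nonneg hax.le _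
    rw [Real.norm_eq_abs, abs_of_nonneg (by positivity)]
    nlinarith [Real.exp_pos (-x)]

lemma C_pos (a : ℝ) (ha : 0 < a) :
    0 < ∫ x in Set.Ioi (0:ℝ), (a + x) ^ (-(3 : ℝ) / 2) * Real.exp (-x) := by
  rw [setIntegral_pos_iff_support_of_nonneg_ae ?_ (g_integrable a ha)]
  · have hsub : Set.Ioi (0:ℝ) ⊆ Function.support
        (fun x : ℝ => (a + x) ^ (-(3 : ℝ) / 2) * Real.exp (-x)) := by
      intro x hx
      have hax : 0 < a + x := by have := hx.out; linarith
      have : 0 < (a + x) ^ (-(3:ℝ)/2) * Real.exp (-x) := by positivity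
      exact this.ne'
    rw [Set.inter_eq_self_of_subset_right hsub, Real.volume_Ioi]
    exact ENNReal.zero_lt_top
  · filter_upwards [ae_restrict_mem measurableSet_Ioi] with x hx
    have hax : 0 < a + x := by have := hx.out; linarith
    positivity

theorem non_steep_orlicz_modular (a : ℝ) (ha : 0 < a)
    (C : ℝ) (hC : C = ∫ x in Set.Ioi (0 : ℝ), (a + x) ^ (-(3 : ℝ) / 2) * Real.exp (-x)) :
    ∀ α : ℝ,
      (∫⁻ x in Set.Ioi (0 : ℝ), ENNReal.ofReal
          ((Real.cosh (α * x) - 1) * (C⁻¹ * (a + x) ^ (-(3 : ℝ) / 2) * Real.exp (-x)))) < ⊤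
        ↔ |α| ≤ 1 := by
  have hCpos : 0 < C := hC ▸ C_pos a ha
  have hCinv : 0 < C⁻¹ := inv_pos.2 hCpos
  intro α
  constructor
  · -- finite → |α| ≤ 1, by contraposition
    contrapose!
    intro hα
    set b := |α| - 1 with hb
    have hb0 : 0 < b := by rw [hb]; linarith
    have hT : Tendsto (fun x : ℝ => Real.exp (b * x) / (a + x) ^ ((3:ℝ)/2)) atTop atTop := by
      have h1 := tendsto_exp_mul_div_rpow_atTop ((3:ℝ)/2) b hb0
      have h2 : Tendsto (fun x : ℝ => a + x) atTop atTop :=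
        tendsto_atTop_add_const_left _ a tendsto_id
      have h4 := (h1.comp h2).const_mul_atTop (Real.exp_pos (-(b*a)))
      refine h4.congr fun x => ?_
      simp only [Function.comp]
      rw [← mul_div_assoc, ← Real.exp_add]
      ring_nf
    have hL : Tendsto (fun x : ℝ => C⁻¹/2 * (Real.exp (b*x) / (a+x) ^ ((3:ℝ)/2))
        + (-(C⁻¹ * a ^ (-(3:ℝ)/2)))) atTop atTop :=
      tendsto_atTop_add_const_right _ _ (hT.const_mul_atTop (by positivity))
    have key : ∀ x : ℝ, 0 < x →
        C⁻¹/2 * (Real.exp (b*x) / (a+x) ^ ((3:ℝ)/2)) + (-(C⁻¹ * a ^ (-(3:ℝ)/2)))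
          ≤ (Real.cosh (α * x) - 1) * (C⁻¹ * (a + x) ^ (-(3 : ℝ) / 2) * Real.exp (-x)) := by
      intro x hx0
      have hax : 0 < a + x := by linarith
      have hP : (a+x) ^ (-(3:ℝ)/2) = ((a+x) ^ ((3:ℝ)/2))⁻¹ := by
        rw [neg_div, Real.rpow_neg hax.le]
      have hPpos : (0:ℝ) < (a+x) ^ (-(3:ℝ)/2) := Real.rpow_pos_of_pos hax _
      have hcosh : Real.exp (|α| * x) / 2 ≤ Real.cosh (α * x) := by
        rw [← Real.cosh_abs, abs_mul, abs_of_pos hx0, Real.cosh_eq]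
        have := (Real.exp_pos (-(|α| * x))).le
        linarith
      have hK : (0:ℝ) ≤ C⁻¹ * (a + x) ^ (-(3 : ℝ) / 2) * Real.exp (-x) := by positivity
      have h1 : (Real.exp (|α| * x)/2 - 1) * (C⁻¹ * (a + x) ^ (-(3 : ℝ) / 2) * Real.exp (-x))
          ≤ (Real.cosh (α * x) - 1) * (C⁻¹ * (a + x) ^ (-(3 : ℝ) / 2) * Real.exp (-x)) :=
        mul_le_mul_of_nonneg_right (by linarith) hK
      have hexp : Real.exp (|α| * x) * Real.exp (-x) = Real.exp (b * x) := by
        rw [← Real.exp_add]; congr 1; rw [hb]; ring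
      have hPa : (a+x) ^ (-(3:ℝ)/2) ≤ a ^ (-(3:ℝ)/2) :=
        Real.rpow_le_rpow_of_nonpos ha (by linarith) (by norm_num)
      have hexp1 : Real.exp (-x) ≤ 1 := Real.exp_le_one_iff.2 (by linarith)
      have hK2 : C⁻¹ * (a + x) ^ (-(3 : ℝ) / 2) * Real.exp (-x) ≤ C⁻¹ * a ^ (-(3:ℝ)/2) := by
        calc C⁻¹ * (a + x) ^ (-(3 : ℝ) / 2) * Real.exp (-x)
            ≤ C⁻¹ * (a + x) ^ (-(3 : ℝ) / 2) * 1 :=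
              mul_le_mul_of_nonneg_left hexp1 (by positivity)
          _ ≤ C⁻¹ * a ^ (-(3:ℝ)/2) := by
              rw [mul_one]; exact mul_le_mul_of_nonneg_left hPa hCinv.le
      have heq : (Real.exp (|α| * x)/2 - 1) * (C⁻¹ * (a + x) ^ (-(3 : ℝ) / 2) * Real.exp (-x))
          = C⁻¹/2 * (Real.exp (b*x) * (a+x) ^ (-(3:ℝ)/2))
            - C⁻¹ * (a + x) ^ (-(3 : ℝ) / 2) * Real.exp (-x) := by
        rw [← hexp]; ring
      have hdiv : Real.exp (b*x) / (a+x) ^ ((3:ℝ)/2)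
          = Real.exp (b*x) * (a+x) ^ (-(3:ℝ)/2) := by
        rw [hP, div_eq_mul_inv]
      rw [hdiv]
      linarith [h1, hK2]
    obtain ⟨N, hN⟩ := Filter.eventually_atTop.1 (hL.eventually_ge_atTop 1)
    set M := max N 1 with hM
    have hM0 : (0:ℝ) < M := lt_of_lt_of_le one_pos (le_max_right _ _)
    calc (⊤ : ENNReal) = volume (Set.Ioi M) := (Real.volume_Ioi).symm
      _ = ∫⁻ _ in Set.Ioi M, 1 := (setLIntegral_one _).symm
      _ ≤ ∫⁻ x in Set.Ioi M, ENNReal.ofReal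
            ((Real.cosh (α * x) - 1) * (C⁻¹ * (a + x) ^ (-(3 : ℝ) / 2) * Real.exp (-x))) := by
          refine lintegral_mono_ae ?_
          filter_upwards [ae_restrict_mem measurableSet_Ioi] with x hx
          have hx0 : 0 < x := lt_trans hM0 hx.out
          have h1le : (1:ℝ) ≤ (Real.cosh (α * x) - 1)
              * (C⁻¹ * (a + x) ^ (-(3 : ℝ) / 2) * Real.exp (-x)) :=
            le_trans (hN x (le_of_lt (lt_of_le_of_lt (le_max_left N 1) hx.out)))
              (key x hx0)
          exact ENNReal.one_le_ofReal.2 h1le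
      _ ≤ ∫⁻ x in Set.Ioi 0, ENNReal.ofReal
            ((Real.cosh (α * x) - 1) * (C⁻¹ * (a + x) ^ (-(3 : ℝ) / 2) * Real.exp (-x))) :=
          lintegral_mono_set (Set.Ioi_subset_Ioi hM0.le)
  · intro hα
    -- bound integrand by C⁻¹ * (a+x)^(-3/2)
    have hbound : ∀ x ∈ Set.Ioi (0:ℝ),
        (Real.cosh (α * x) - 1) * (C⁻¹ * (a + x) ^ (-(3 : ℝ) / 2) * Real.exp (-x))
          ≤ C⁻¹ * (a + x) ^ (-(3 : ℝ) / 2) := by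
      intro x hx
      have hx0 : 0 < x := hx.out
      have hax : 0 < a + x := by linarith
      have h1 : Real.cosh (α * x) ≤ Real.cosh x := by
        rw [Real.cosh_le_cosh, abs_mul]
        calc |α| * |x| ≤ 1 * |x| := by
              exact mul_le_mul_of_nonneg_right hα (abs_nonneg x)
          _ = |x| := one_mul _
      have h2 : Real.cosh x ≤ Real.exp x := by
        have := Real.exp_le_exp.2 (by linarith : -x ≤ x)
        rw [Real.cosh_eq]; linarith
      have hK : (0:ℝ) ≤ C⁻¹ * (a + x) ^ (-(3 : ℝ) / 2) * Real.exp (-x) := by positivity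
      have h3 : (Real.cosh (α * x) - 1) * (C⁻¹ * (a + x) ^ (-(3 : ℝ) / 2) * Real.exp (-x))
          ≤ Real.exp x * (C⁻¹ * (a + x) ^ (-(3 : ℝ) / 2) * Real.exp (-x)) := by
        apply mul_le_mul_of_nonneg_right _ hK
        linarith
      have hexp : Real.exp x * Real.exp (-x) = 1 := by
        rw [← Real.exp_add]; simp
      calc (Real.cosh (α * x) - 1) * (C⁻¹ * (a + x) ^ (-(3 : ℝ) / 2) * Real.exp (-x))
          ≤ Real.exp x * (C⁻¹ * (a + x) ^ (-(3 : ℝ) / 2) * Real.exp (-x)) := h3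
        _ = C⁻¹ * (a + x) ^ (-(3 : ℝ) / 2) * (Real.exp x * Real.exp (-x)) := by ring
        _ = C⁻¹ * (a + x) ^ (-(3 : ℝ) / 2) := by rw [hexp, mul_one]
    have hfin : (∫⁻ x in Set.Ioi (0:ℝ),
        ENNReal.ofReal (C⁻¹ * (a + x) ^ (-(3 : ℝ) / 2))) < ⊤ :=
      ((rpow_shift_integrable a ha).const_mul C⁻¹).lintegral_lt_top
    refine lt_of_le_of_lt (lintegral_mono_ae ?_) hfin
    filter_upwards [ae_restrict_mem measurableSet_Ioi] with x hx
    exact ENNReal.ofReal_le_ofReal (hbound x hx)
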